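/- There exists a tournament on 7 vertices containing no transitive subtournament on 4 vertices, i.e., f(4) ≥ 8. -/

import Mathlib

set_option maxRecDepth 10000

def IsTournament {V : Type*} (T : V → V → Prop) : Prop :=
  (∀ v, ¬ T v v) ∧ ∀ u v : V, u ≠ v → (T u v ↔ ¬ T v u)

def HasTT {V : Type*} (k : ℕ) (T : V → V → Prop) : Prop :=
  ∃ e : Fin k → V, Function.Injective e ∧ ∀ i j : Fin k, i < j → T (e i) (e j)

/-- The quadratic-residue tournament on 7 vertices, as a boolean relation. -/
def QRb : Fin 7 → Fin 7 → Bool := fun i j =>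
  let d := (j.val + 7 - i.val) % 7
  d = 1 || d = 2 || d = 4

/-- The quadratic-residue tournament on 7 vertices. -/
def QR : Fin 7 → Fin 7 → Prop := fun i j => QRb i j = true

lemma QR_tournament : IsTournament QR := by
  unfold IsTournament QR; decide

lemma QR_no4 : ∀ a b c d : Fin 7,
    ¬(QRb a b ∧ QRb a c ∧ QRb a d ∧ QRb b c ∧ QRb b d ∧ QRb c d) := by decide

lemma QR_noTT : ¬ HasTT 4 QR := by
  rintro ⟨e, -, he⟩
  exact QR_no4 (e 0) (e 1) (e 2) (e 3)
    ⟨he 0 1 (by decide), he 0 2 (by decide), he 0 3 (by decide),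
     he 1 2 (by decide), he 1 3 (by decide), he 2 3 (by decide)⟩

/-- In any tournament, a vertex set of size `2^k` contains a transitive chain of
length `k+1`. -/
lemma key {V : Type*} [DecidableEq V] (T : V → V → Prop) (hT : IsTournament T) :
    ∀ (k : ℕ) (s : Finset V), 2 ^ k ≤ s.card →
      ∃ e : Fin (k + 1) → V, (∀ i, e i ∈ s) ∧ Function.Injective e ∧
        ∀ i j, i < j → T (e i) (e j) := by
  classical
  intro k
  induction k with
  | zero =>
    intro s hs
    obtain ⟨v, hv⟩ := Finset.card_pos.mp (by simpa using hs)
    refine ⟨fun _ => v, fun _ => hv, fun i j _ => Fin.fin_one_eq_zero i ▸ Fin.fin_one_eq_zero j ▸ rfl,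
      fun i j hij => absurd ((Fin.fin_one_eq_zero i).trans (Fin.fin_one_eq_zero j).symm) hij.ne⟩
  | succ k ih =>
    intro s hs
    have hpos : 0 < s.card := lt_of_lt_of_le (Nat.pow_pos (by norm_num)) hs
    obtain ⟨v, hv⟩ := Finset.card_pos.mp hpos
    set out := (s.erase v).filter (fun u => T v u) with hout
    set inn := (s.erase v).filter (fun u => ¬ T v u) with hinn
    have hsplit : out.card + inn.card = s.card - 1 := by
      rw [hout, hinn, Finset.card_filter_add_card_filter_not, Finset.card_erase_of_mem hv]
    have hcase : 2 ^ k ≤ out.card ∨ 2 ^ k ≤ inn.card := by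
      by_contra h
      push_neg at h
      have := pow_succ 2 k ▸ hs
      omega
    rcases hcase with hc | hc
    · obtain ⟨e', he'mem, he'inj, he'ord⟩ := ih out hc
      have hne : ∀ i, e' i ≠ v := fun i =>
        Finset.ne_of_mem_erase (Finset.mem_filter.mp (he'mem i)).1
      refine ⟨Fin.cons v e', ?_, ?_, ?_⟩
      · intro i
        refine Fin.cases hv (fun i => ?_) i
        simp only [Fin.cons_succ]
        exact Finset.mem_of_mem_erase (Finset.mem_filter.mp (he'mem i)).1
      · refine Fin.cons_injective_iff.mpr ⟨?_, he'inj⟩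
        rintro ⟨i, hi⟩
        exact hne i hi
      · intro i j hij
        induction i using Fin.cases with
        | zero =>
          induction j using Fin.cases with
          | zero => exact absurd hij (lt_irrefl _)
          | succ j =>
            simp only [Fin.cons_zero, Fin.cons_succ]
            exact (Finset.mem_filter.mp (he'mem j)).2
        | succ i =>
          induction j using Fin.cases with
          | zero => exact absurd hij (by simp [Fin.lt_def])
          | succ j =>
            simp only [Fin.cons_succ]
            exact he'ord i j (by simpa [Fin.succ_lt_succ_iff] using hij)
    · obtain ⟨e', he'mem, he'inj, he'ord⟩ := ih inn hc
      have hne : ∀ i, e' i ≠ v := fun i =>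
        Finset.ne_of_mem_erase (Finset.mem_filter.mp (he'mem i)).1
      have hTin : ∀ i, T (e' i) v := fun i =>
        (hT.2 (e' i) v (hne i)).mpr (Finset.mem_filter.mp (he'mem i)).2
      refine ⟨Fin.snoc e' v, ?_, ?_, ?_⟩
      · intro i
        induction i using Fin.lastCases with
        | last => simpa using hv
        | cast i =>
          simp only [Fin.snoc_castSucc]
          exact Finset.mem_of_mem_erase (Finset.mem_filter.mp (he'mem i)).1
      · intro i j hij
        induction i using Fin.lastCases with
        | last =>
          induction j using Fin.lastCases with
          | last => rfl
          | cast j => simp only [Fin.snoc_last, Fin.snoc_castSucc] at hij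
                      exact absurd hij.symm (hne j)
        | cast i =>
          induction j using Fin.lastCases with
          | last => simp only [Fin.snoc_last, Fin.snoc_castSucc] at hij
                    exact absurd hij (hne i)
          | cast j => simp only [Fin.snoc_castSucc] at hij
                      exact congrArg Fin.castSucc (he'inj hij)
      · intro i j hij
        induction i using Fin.lastCases with
        | last =>
          induction j using Fin.lastCases with
          | last => exact absurd hij (lt_irrefl _)
          | cast j => exact absurd hij (by simp [Fin.lt_def])
        | cast i =>
          induction j using Fin.lastCases with
          | last =>
            simp only [Fin.snoc_last, Fin.snoc_castSucc]
            exact hTin i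
          | cast j =>
            simp only [Fin.snoc_castSucc]
            exact he'ord i j (by simpa [Fin.castSucc_lt_castSucc_iff] using hij)

lemma eight_mem : ∀ T : Fin 8 → Fin 8 → Prop, IsTournament T → HasTT 4 T := by
  intro T hT
  obtain ⟨e, -, hinj, hord⟩ := key T hT 3 Finset.univ (by simp)
  exact ⟨e, hinj, hord⟩

/-- There is a tournament on 7 vertices with no transitive subtournament on 4 vertices;
hence f(4) ≥ 8. -/
theorem stmt_15 :
    (∃ T : Fin 7 → Fin 7 → Prop, IsTournament T ∧ ¬ HasTT 4 T) ∧
    8 ≤ sInf {n : ℕ | ∀ T : Fin n → Fin n → Prop, IsTournament T → HasTT 4 T} := by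
  constructor
  · exact ⟨QR, QR_tournament, QR_noTT⟩
  · refine le_csInf ⟨8, eight_mem⟩ ?_
    intro m hm
    by_contra hlt
    push_neg at hlt
    have hm7 : m ≤ 7 := by omega
    set T' : Fin m → Fin m → Prop :=
      fun i j => QR (Fin.castLE hm7 i) (Fin.castLE hm7 j) with hT'
    have hT'tour : IsTournament T' := by
      constructor
      · intro v
        exact QR_tournament.1 _
      · intro u v huv
        exact QR_tournament.2 _ _ (fun h => huv (Fin.castLE_injective hm7 h))
    obtain ⟨e, hinj, hord⟩ := hm T' hT'tour
    exact QR_noTT ⟨fun i => Fin.castLE hm7 (e i),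
      fun a b h => hinj (Fin.castLE_injective hm7 h), fun i j hij => hord i j hij⟩
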